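/- Assume there exist r, δ > 0 and an index i₀ ∈ {1,…,n} such that λ_{i₀} ≥ μ_{i₀}/δ and f_{i₀}(t, x₁₀,…,x₁m₁,…,x_{n0},…,x_{n m_n}) ≥ δ·x_{i₀0} for all (t, x₁₀,…,x_{n m_n}) ∈ I_r. Let φ_{i₀} ∈ C[0,1] be a nonnegative, not identically zero eigenfunction of L_{i₀} with φ_{i₀} = μ_{i₀} L_{i₀} φ_{i₀}, and let φ := (φ₁,…,φ_n) ∈ P \ {0} be built from such eigenfunctions. Then u ≠ T u + σ·φ for every u ∈ P with ‖u‖ = r and every σ > 0. -/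

import Mathlib

open Set MeasureTheory

/-- The `Cᵐ[0,1]` norm `max_{0 ≤ j ≤ mi} ‖g⁽ʲ⁾‖_∞` (derivatives within `[0,1]`). -/
noncomputable def normCm (mi : ℕ) (g : ℝ → ℝ) : ℝ :=
  ⨆ j : Fin (mi + 1), ⨆ t : Set.Icc (0:ℝ) 1, |iteratedDerivWithin j.val g (Set.Icc 0 1) ↑t|

/-- The norm `‖u‖ = max_i ‖u_i‖_{C^{m_i}}` on `∏ᵢ C^{m_i}[0,1]`. -/
noncomputable def normP {n : ℕ} (m : Fin n → ℕ) (u : Fin n → ℝ → ℝ) : ℝ :=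
  ⨆ i, normCm (m i) (u i)

/-- Membership in the cone `P = {u ∈ ∏ᵢ C^{m_i}[0,1] : uᵢ ≥ 0 on [0,1]}`. -/
def memP {n : ℕ} (m : Fin n → ℕ) (u : Fin n → ℝ → ℝ) : Prop :=
  (∀ i, ContDiffOn ℝ (m i) (u i) (Set.Icc 0 1)) ∧
  (∀ i, ∀ t ∈ Set.Icc (0:ℝ) 1, 0 ≤ u i t)

/-- The vector `(u₁(s),…,u₁^{(m₁)}(s),…,u_n(s),…,u_n^{(m_n)}(s))` of values and
derivatives (within `[0,1]`), fed to the nonlinearities. -/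
noncomputable def jet {n : ℕ} (m : Fin n → ℕ) (u : Fin n → ℝ → ℝ) (s : ℝ) :
    (j : Fin n) → Fin (m j + 1) → ℝ :=
  fun j l => iteratedDerivWithin l.val (u j) (Set.Icc 0 1) s

/-- The box `∏ᵢ ([0,ρ] × [−ρ,ρ]^{m_i})`, i.e. the `x`-section of `I_ρ`. -/
def Jset {n : ℕ} (m : Fin n → ℕ) (ρ : ℝ) : Set ((j : Fin n) → Fin (m j + 1) → ℝ) :=
  {x | ∀ j, x j 0 ∈ Set.Icc (0:ℝ) ρ ∧ ∀ l : Fin (m j + 1), l ≠ 0 → x j l ∈ Set.Icc (-ρ) ρ}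

/-- The sup norm `‖g‖_∞` on `[0,1]`. -/
noncomputable def supIcc (g : ℝ → ℝ) : ℝ := ⨆ t : Set.Icc (0:ℝ) 1, |g ↑t|

lemma jet_bound {n : ℕ} (m : Fin n → ℕ) (u : Fin n → ℝ → ℝ)
    (hu : ∀ i, ContDiffOn ℝ (m i) (u i) (Set.Icc 0 1))
    (j : Fin n) (l : ℕ) (hl : l ≤ m j) (s : ℝ) (hs : s ∈ Set.Icc (0:ℝ) 1) :
    |iteratedDerivWithin l (u j) (Set.Icc 0 1) s| ≤ normP m u := by
  have hUD : UniqueDiffOn ℝ (Set.Icc (0:ℝ) 1) := uniqueDiffOn_Icc one_pos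
  -- boundedness of each inner sup
  have hbdd : ∀ l' : Fin (m j + 1), BddAbove (Set.range fun t : Set.Icc (0:ℝ) 1 =>
      |iteratedDerivWithin l'.val (u j) (Set.Icc 0 1) ↑t|) := by
    intro l'
    have hcont : ContinuousOn (iteratedDerivWithin l'.val (u j) (Set.Icc 0 1)) (Set.Icc 0 1) :=
      (hu j).continuousOn_iteratedDerivWithin (by exact_mod_cast Nat.lt_succ_iff.mp l'.isLt) hUD
    have hcomp : IsCompact ((fun t => |iteratedDerivWithin l'.val (u j) (Set.Icc 0 1) t|) ''
        (Set.Icc (0:ℝ) 1)) := isCompact_Icc.image_of_continuousOn hcont.abs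
    have hrange : (Set.range fun t : Set.Icc (0:ℝ) 1 =>
        |iteratedDerivWithin l'.val (u j) (Set.Icc 0 1) ↑t|) =
        (fun t => |iteratedDerivWithin l'.val (u j) (Set.Icc 0 1) t|) '' (Set.Icc (0:ℝ) 1) := by
      ext y
      simp
    rw [hrange]
    exact hcomp.bddAbove
  have h1 : |iteratedDerivWithin l (u j) (Set.Icc 0 1) s| ≤
      ⨆ t : Set.Icc (0:ℝ) 1, |iteratedDerivWithin (Fin.mk l (Nat.lt_succ_of_le hl)).val (u j) (Set.Icc 0 1) ↑t| :=
    le_ciSup (hbdd ⟨l, Nat.lt_succ_of_le hl⟩) (⟨s, hs⟩ : Set.Icc (0:ℝ) 1)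
  have h2 : (⨆ t : Set.Icc (0:ℝ) 1, |iteratedDerivWithin (Fin.mk l (Nat.lt_succ_of_le hl)).val (u j) (Set.Icc 0 1) ↑t|)
      ≤ normCm (m j) (u j) := by
    rw [normCm]
    exact le_ciSup (f := fun j' : Fin (m j + 1) => ⨆ t : Set.Icc (0:ℝ) 1,
      |iteratedDerivWithin j'.val (u j) (Set.Icc 0 1) ↑t|)
      (Set.Finite.bddAbove (Set.finite_range _)) (Fin.mk l (Nat.lt_succ_of_le hl))
  have h3 : normCm (m j) (u j) ≤ normP m u := by
    rw [normP]
    exact le_ciSup (f := fun i => normCm (m i) (u i))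
      (Set.Finite.bddAbove (Set.finite_range _)) j
  calc _ ≤ _ := h1
    _ ≤ _ := h2
    _ ≤ _ := h3

lemma integrable_kernel_mul {k Φ : ℝ → ℝ} (hk : Measurable k)
    (hΦ : IntegrableOn Φ (Set.Icc (0:ℝ) 1))
    (hdom : ∀ᵐ s ∂(volume.restrict (Set.Icc (0:ℝ) 1)), |k s| ≤ Φ s)
    {g : ℝ → ℝ} (hg : ContinuousOn g (Set.Icc (0:ℝ) 1)) :
    IntervalIntegrable (fun s => k s * g s) volume 0 1 := by
  obtain ⟨C, hC⟩ := isCompact_Icc.exists_bound_of_continuousOn hg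
  rw [intervalIntegrable_iff_integrableOn_Ioc_of_le zero_le_one]
  have hsub : Set.Ioc (0:ℝ) 1 ⊆ Set.Icc 0 1 := Set.Ioc_subset_Icc_self
  have hmeas : AEStronglyMeasurable (fun s => k s * g s) (volume.restrict (Set.Ioc (0:ℝ) 1)) := by
    exact (hk.aestronglyMeasurable.restrict).mul
      (((hg.mono hsub).aestronglyMeasurable measurableSet_Ioc))
  have hΦ' : IntegrableOn (fun s => Φ s * C) (Set.Ioc (0:ℝ) 1) :=
    (hΦ.mono_set hsub).mul_const C
  refine hΦ'.mono' hmeas ?_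
  have hdom' : ∀ᵐ s ∂(volume.restrict (Set.Ioc (0:ℝ) 1)), |k s| ≤ Φ s :=
    ae_restrict_of_ae_restrict_of_subset hsub hdom
  filter_upwards [hdom', ae_restrict_mem measurableSet_Ioc] with s h1 h2
  have := hC s (hsub h2)
  have h0 : (0:ℝ) ≤ |k s| := abs_nonneg _
  calc ‖k s * g s‖ = |k s| * |g s| := by rw [Real.norm_eq_abs, abs_mul]
    _ ≤ Φ s * C := by
        apply mul_le_mul h1 (by simpa using this) (abs_nonneg _) (le_trans h0 h1)


/-- under the eigenvalue-comparison condition `(idx0)` at `r`, with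
`φ = (φ₁,…,φ_n) ∈ P \ {0}` built from nonnegative nontrivial eigenfunctions
`φ_i = μ_i L_i φ_i`, one has `u ≠ T u + σ φ` for every `u ∈ P` with `‖u‖ = r`
and every `σ > 0`. -/
theorem stmt_3
    (n : ℕ) (hn : 0 < n) (m p : Fin n → ℕ)
    (hm : ∀ i, 1 ≤ m i) (hp : ∀ i, 1 ≤ p i)
    -- `dk i l t s` denotes `∂ˡk_i/∂tˡ(t,s)`; in particular `dk i 0` is the kernel `k_i`
    (dk : (i : Fin n) → ℕ → ℝ → ℝ → ℝ)
    -- (C₁): `k_i ≥ 0`, measurable, continuous in `t` for a.e. `s`, dominated by `Φ_{i0} ∈ L¹`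
    -- (C₂)-(C₃): similarly for the derivatives, the `m_i`-th one off the diagonal only
    (hk_nonneg : ∀ i, ∀ t ∈ Set.Icc (0:ℝ) 1, ∀ s ∈ Set.Icc (0:ℝ) 1, 0 ≤ dk i 0 t s)
    (hk_meas : ∀ i, ∀ l ≤ m i, Measurable (Function.uncurry (dk i l)))
    (hk_cont : ∀ i, ∀ l < m i, ∀ᵐ s ∂(volume.restrict (Set.Icc (0:ℝ) 1)),
      ContinuousOn (fun t => dk i l t s) (Set.Icc (0:ℝ) 1))
    (hk_cont_top : ∀ i, ∀ᵐ s ∂(volume.restrict (Set.Icc (0:ℝ) 1)),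
      ContinuousOn (fun t => dk i (m i) t s) (Set.Icc (0:ℝ) 1 \ {s}))
    (Φ : (i : Fin n) → ℕ → ℝ → ℝ)
    (hΦ_int : ∀ i, ∀ l ≤ m i, IntegrableOn (Φ i l) (Set.Icc (0:ℝ) 1))
    (hΦ_dom : ∀ i, ∀ l ≤ m i, ∀ t ∈ Set.Icc (0:ℝ) 1,
      ∀ᵐ s ∂(volume.restrict (Set.Icc (0:ℝ) 1)), |dk i l t s| ≤ Φ i l s)
    (hk_deriv : ∀ i, ∀ l, l + 1 < m i → ∀ s ∈ Set.Icc (0:ℝ) 1, ∀ t ∈ Set.Icc (0:ℝ) 1,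
      HasDerivWithinAt (fun τ => dk i l τ s) (dk i (l + 1) t s) (Set.Icc (0:ℝ) 1) t)
    (hk_deriv_top : ∀ i, ∀ s ∈ Set.Icc (0:ℝ) 1, ∀ t ∈ Set.Icc (0:ℝ) 1, t ≠ s →
      HasDerivWithinAt (fun τ => dk i (m i - 1) τ s) (dk i (m i) t s) (Set.Icc (0:ℝ) 1) t)
    -- (C₄): the nonlinearities `f_i` are continuous and nonnegative
    (f : (i : Fin n) → ℝ → ((j : Fin n) → Fin (m j + 1) → ℝ) → ℝ)
    (hf_cont : ∀ i, ContinuousOn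
      (fun q : ℝ × ((j : Fin n) → Fin (m j + 1) → ℝ) => f i q.1 q.2)
      (Set.Icc (0:ℝ) 1 ×ˢ {x : (j : Fin n) → Fin (m j + 1) → ℝ | ∀ j, 0 ≤ x j 0}))
    (hf_nonneg : ∀ i, ∀ t ∈ Set.Icc (0:ℝ) 1,
      ∀ x : (j : Fin n) → Fin (m j + 1) → ℝ, (∀ j, 0 ≤ x j 0) → 0 ≤ f i t x)
    -- (C₅): `γ_{ij} ∈ C^{m_i}[0,1]` nonnegative; (C₆): nonnegative parameters
    (γ : (i : Fin n) → Fin (p i) → ℝ → ℝ)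
    (hγ_smooth : ∀ i j, ContDiffOn ℝ (m i) (γ i j) (Set.Icc 0 1))
    (hγ_nonneg : ∀ i j, ∀ t ∈ Set.Icc (0:ℝ) 1, 0 ≤ γ i j t)
    (lam : Fin n → ℝ) (η : (i : Fin n) → Fin (p i) → ℝ)
    (hlam : ∀ i, 0 ≤ lam i) (hη : ∀ i j, 0 ≤ η i j)
    -- (C₈): the functionals `h_{ij} : P → [0,∞)` are continuous and map bounded
    -- sets into bounded sets
    (h : (i : Fin n) → Fin (p i) → (Fin n → ℝ → ℝ) → ℝ)
    (hh_nonneg : ∀ i j, ∀ u, memP m u → 0 ≤ h i j u)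
    (hh_cont : ∀ i j, ∀ u, memP m u → ∀ ε > (0:ℝ), ∃ δ' > (0:ℝ), ∀ v, memP m v →
      normP m (fun i' t => u i' t - v i' t) < δ' → |h i j u - h i j v| < ε)
    (hh_bdd : ∀ i j, ∀ B : ℝ, ∃ C : ℝ, ∀ u, memP m u → normP m u ≤ B → h i j u ≤ C)
    -- (C₇): the Hammerstein operator `L_i w(t) = ∫₀¹ k_i(t,s)w(s)ds` on `C[0,1]`
    -- has spectral radius `r(L_i) = rL i > 0`; its characteristic value is `μ_i = (rL i)⁻¹`
    (L : (i : Fin n) → C(Set.Icc (0:ℝ) 1, ℝ) →L[ℝ] C(Set.Icc (0:ℝ) 1, ℝ))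
    (hL : ∀ i (w : C(Set.Icc (0:ℝ) 1, ℝ)) (t : Set.Icc (0:ℝ) 1),
      L i w t = ∫ s in (0:ℝ)..1, dk i 0 ↑t s * w (Set.projIcc 0 1 zero_le_one s))
    (rL : Fin n → ℝ) (hrL_pos : ∀ i, 0 < rL i)
    (hrL : ∀ i, spectralRadius ℝ (L i) = ENNReal.ofReal (rL i))
    (r δ : ℝ) (hr : 0 < r) (hδ : 0 < δ) (i₀ : Fin n)
    (hidx0a : (rL i₀)⁻¹ / δ ≤ lam i₀)
    (hidx0b : ∀ t ∈ Set.Icc (0:ℝ) 1, ∀ x ∈ Jset m r, δ * x i₀ 0 ≤ f i₀ t x)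
    (φ : Fin n → ℝ → ℝ)
    (hφ_cont : ∀ i, ContinuousOn (φ i) (Set.Icc 0 1))
    (hφ_nonneg : ∀ i, ∀ t ∈ Set.Icc (0:ℝ) 1, 0 ≤ φ i t)
    (hφ_ne : ∀ i, ∃ t ∈ Set.Icc (0:ℝ) 1, φ i t ≠ 0)
    (hφ_eig : ∀ i, ∀ t ∈ Set.Icc (0:ℝ) 1,
      φ i t = (rL i)⁻¹ * ∫ s in (0:ℝ)..1, dk i 0 t s * φ i s)
    (hφ_memP : memP m φ) :
    ∀ u : Fin n → ℝ → ℝ, memP m u → normP m u = r → ∀ σ : ℝ, 0 < σ →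
      ¬ (∀ i, ∀ t ∈ Set.Icc (0:ℝ) 1,
        u i t = (lam i * (∫ s in (0:ℝ)..1, dk i 0 t s * f i s (jet m u s)) + ∑ j, η i j * γ i j t * h i j u) + σ * φ i t) := by
  intro u hu hnorm σ hσ heq
  have hUD : UniqueDiffOn ℝ (Set.Icc (0:ℝ) 1) := uniqueDiffOn_Icc one_pos
  have hjet0 : ∀ (j : Fin n) (s : ℝ), jet m u s j 0 = u j s := by
    intro j s; simp [jet]
  have hjetJ : ∀ s ∈ Set.Icc (0:ℝ) 1, jet m u s ∈ Jset m r := by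
    intro s hs j
    constructor
    · rw [hjet0]
      refine ⟨hu.2 j s hs, ?_⟩
      have hb := jet_bound m u hu.1 j 0 (Nat.zero_le _) s hs
      rw [hnorm, iteratedDerivWithin_zero] at hb
      exact (abs_le.mp hb).2
    · intro l _
      have hb := jet_bound m u hu.1 j l.val (Nat.lt_succ_iff.mp l.isLt) s hs
      rw [hnorm] at hb
      exact Set.mem_Icc.mpr (abs_le.mp hb)
  have hjet_cont : ContinuousOn (fun s => jet m u s) (Set.Icc (0:ℝ) 1) := by
    apply continuousOn_pi.2
    intro j
    apply continuousOn_pi.2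
    intro l
    exact (hu.1 j).continuousOn_iteratedDerivWithin
      (by exact_mod_cast Nat.lt_succ_iff.mp l.isLt) hUD
  have hfj_cont : ContinuousOn (fun s => f i₀ s (jet m u s)) (Set.Icc (0:ℝ) 1) := by
    refine ContinuousOn.comp (g := fun q : ℝ × ((j : Fin n) → Fin (m j + 1) → ℝ) => f i₀ q.1 q.2)
      (f := fun s => (s, jet m u s)) (hf_cont i₀) (continuousOn_id.prodMk hjet_cont) ?_
    intro s hs
    refine ⟨hs, fun j => ?_⟩
    show (0:ℝ) ≤ jet m u s j 0
    rw [hjet0]; exact hu.2 j s hs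
  have hkmeas : ∀ t : ℝ, Measurable (fun s => dk i₀ 0 t s) := fun t =>
    (hk_meas i₀ 0 (Nat.zero_le _)).comp (measurable_const.prodMk measurable_id)
  have hIntF : ∀ t ∈ Set.Icc (0:ℝ) 1,
      IntervalIntegrable (fun s => dk i₀ 0 t s * f i₀ s (jet m u s)) volume 0 1 :=
    fun t ht => integrable_kernel_mul (hkmeas t) (hΦ_int i₀ 0 (Nat.zero_le _))
      (hΦ_dom i₀ 0 (Nat.zero_le _) t ht) hfj_cont
  have hIntφ : ∀ t ∈ Set.Icc (0:ℝ) 1,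
      IntervalIntegrable (fun s => dk i₀ 0 t s * φ i₀ s) volume 0 1 :=
    fun t ht => integrable_kernel_mul (hkmeas t) (hΦ_int i₀ 0 (Nat.zero_le _))
      (hΦ_dom i₀ 0 (Nat.zero_le _) t ht) (hφ_cont i₀)
  have hInn : ∀ t ∈ Set.Icc (0:ℝ) 1,
      0 ≤ ∫ s in (0:ℝ)..1, dk i₀ 0 t s * f i₀ s (jet m u s) :=
    fun t ht => intervalIntegral.integral_nonneg zero_le_one (fun s hs =>
      mul_nonneg (hk_nonneg i₀ t ht s hs)
        (hf_nonneg i₀ s hs _ (fun j => by rw [hjet0]; exact hu.2 j s hs)))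
  have hBnn : ∀ t ∈ Set.Icc (0:ℝ) 1, 0 ≤ ∑ j, η i₀ j * γ i₀ j t * h i₀ j u :=
    fun t ht => Finset.sum_nonneg (fun j _ =>
      mul_nonneg (mul_nonneg (hη i₀ j) (hγ_nonneg i₀ j t ht)) (hh_nonneg i₀ j u hu))
  set S : Set ℝ := {c | ∀ t ∈ Set.Icc (0:ℝ) 1, c * φ i₀ t ≤ u i₀ t} with hSdef
  have hσS : σ ∈ S := by
    intro t ht
    have he := heq i₀ t ht
    have h1 := hInn t ht
    have h2 := hBnn t ht
    nlinarith [hlam i₀, mul_nonneg (hlam i₀) h1]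
  obtain ⟨t₀, ht₀, hφt₀⟩ := hφ_ne i₀
  have hφt₀pos : 0 < φ i₀ t₀ := lt_of_le_of_ne (hφ_nonneg i₀ t₀ ht₀) (Ne.symm hφt₀)
  have hSbdd : BddAbove S :=
    ⟨u i₀ t₀ / φ i₀ t₀, fun c hc => (le_div_iff₀ hφt₀pos).2 (hc t₀ ht₀)⟩
  set σb := sSup S with hσbdef
  have hσb_ge : σ ≤ σb := le_csSup hSbdd hσS
  have hσb_pos : 0 < σb := lt_of_lt_of_le hσ hσb_ge
  have hσbφ : ∀ t ∈ Set.Icc (0:ℝ) 1, σb * φ i₀ t ≤ u i₀ t := by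
    intro t ht
    rcases eq_or_lt_of_le (hφ_nonneg i₀ t ht) with h0 | hpos
    · rw [← h0, mul_zero]; exact hu.2 i₀ t ht
    · have hub : σb ≤ u i₀ t / φ i₀ t :=
        csSup_le ⟨σ, hσS⟩ (fun c hc => (le_div_iff₀ hpos).2 (hc t ht))
      calc σb * φ i₀ t ≤ (u i₀ t / φ i₀ t) * φ i₀ t :=
            mul_le_mul_of_nonneg_right hub hpos.le
        _ = u i₀ t := div_mul_cancel₀ _ hpos.ne'
  -- key step: σb + σ ∈ S
  have hkey : (σb + σ) ∈ S := by
    intro t ht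
    have he := heq i₀ t ht
    have hmono : (δ * σb) * (∫ s in (0:ℝ)..1, dk i₀ 0 t s * φ i₀ s)
        ≤ ∫ s in (0:ℝ)..1, dk i₀ 0 t s * f i₀ s (jet m u s) := by
      rw [← intervalIntegral.integral_const_mul]
      apply intervalIntegral.integral_mono_on zero_le_one
        ((hIntφ t ht).const_mul _) (hIntF t ht)
      intro s hs
      have hk0 := hk_nonneg i₀ t ht s hs
      have hfs := hidx0b s hs _ (hjetJ s hs)
      rw [hjet0] at hfs
      have hchain : δ * (σb * φ i₀ s) ≤ δ * u i₀ s :=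
        mul_le_mul_of_nonneg_left (hσbφ s hs) hδ.le
      calc (δ * σb) * (dk i₀ 0 t s * φ i₀ s)
          = dk i₀ 0 t s * (δ * (σb * φ i₀ s)) := by ring
        _ ≤ dk i₀ 0 t s * f i₀ s (jet m u s) :=
            mul_le_mul_of_nonneg_left (hchain.trans hfs) hk0
    have hrL0 : (rL i₀) ≠ 0 := (hrL_pos i₀).ne'
    have hIφ : (∫ s in (0:ℝ)..1, dk i₀ 0 t s * φ i₀ s) = rL i₀ * φ i₀ t := by
      rw [hφ_eig i₀ t ht]
      field_simp
    have hlamδ : 1 ≤ lam i₀ * (δ * rL i₀) := by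
      have h1 : (rL i₀)⁻¹ / δ * (δ * rL i₀) = 1 := by field_simp
      have h2 := mul_le_mul_of_nonneg_right hidx0a (mul_pos hδ (hrL_pos i₀)).le
      rw [h1] at h2
      exact h2
    have hφt : 0 ≤ φ i₀ t := hφ_nonneg i₀ t ht
    have hstep : σb * φ i₀ t ≤
        lam i₀ * ∫ s in (0:ℝ)..1, dk i₀ 0 t s * f i₀ s (jet m u s) := by
      rw [hIφ] at hmono
      have h4 := mul_le_mul_of_nonneg_left hmono (hlam i₀)
      nlinarith [mul_nonneg hσb_pos.le hφt]
    have h2 := hBnn t ht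
    have hexp : (σb + σ) * φ i₀ t = σb * φ i₀ t + σ * φ i₀ t := by ring
    rw [hexp]
    linarith
  have hcontra := le_csSup hSbdd hkey
  linarith
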